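/- Assume p_{−1,−1} = 0, p_{0,0} > 0 and p_{1,0} > 0. Then for every complex x with |x| = 1 and x ≠ 1, the polynomial y ↦ R(x,y) has exactly one root (counted with multiplicity) in the open unit disk {y : |y| < 1}. -/

import Mathlib

open Polynomial

lemma quad_one_root (a b c : ℂ) (h : ‖a‖ + ‖c‖ < ‖b‖) :
    Multiset.card (Multiset.filter (fun z => ‖z‖ < 1)
      (C a * X ^ 2 + C b * X + C c).roots) = 1 := by
  have hb : b ≠ 0 := by
    intro hb0
    rw [hb0, norm_zero] at h
    nlinarith [norm_nonneg a, norm_nonneg c]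
  have hbn : (0:ℝ) < ‖b‖ := norm_pos_iff.mpr hb
  by_cases ha : a = 0
  · -- linear case
    have hroot : (C a * X ^ 2 + C b * X + C c).roots = {-c / b} := by
      have heq : C a * X ^ 2 + C b * X + C c = C b * (X - C (-c / b)) := by
        rw [ha, mul_sub, ← C_mul]
        rw [C_0, zero_mul, zero_add]
        congr 1
        rw [← C_neg]
        congr 1
        field_simp
      rw [heq, roots_C_mul _ hb, roots_X_sub_C]
    rw [hroot]
    have hlt : ‖-c / b‖ < 1 := by
      rw [norm_div, norm_neg, div_lt_one hbn]
      nlinarith [norm_nonneg a]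
    simp only [Multiset.filter_singleton, if_pos hlt, Multiset.card_singleton]
  · -- quadratic case
    set P : Polynomial ℂ := C a * X ^ 2 + C b * X + C c with hP
    have hdeg : P.natDegree = 2 := natDegree_quadratic ha
    have hPne : P ≠ 0 := fun h0 => by simp [h0] at hdeg
    have hsplits : Splits P := IsAlgClosed.splits P
    have hcard : Multiset.card P.roots = 2 := by
      rw [(splits_iff_card_roots).mp hsplits, hdeg]
    obtain ⟨y₁, y₂, hy⟩ := Multiset.card_eq_two.mp hcard
    have hlead : P.leadingCoeff = a := by
      rw [leadingCoeff, hdeg]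
      simp [hP, coeff_C]
    have hfact : P = C a * X ^ 2 + C (-(a * (y₁ + y₂))) * X + C (a * (y₁ * y₂)) := by
      have h1 := hsplits.eq_prod_roots
      rw [hlead, hy] at h1
      have h2 : (Multiset.map (fun z => X - C z) ({y₁, y₂} : Multiset ℂ)).prod
          = (X - C y₁) * (X - C y₂) := by
        simp [Multiset.prod_cons]
      rw [h2] at h1
      rw [h1]
      simp only [C_mul, C_add, C_neg]
      ring
    have hbv : b = -(a * (y₁ + y₂)) := by
      have := congrArg (fun q => Polynomial.coeff q 1) hfact
      simpa [hP, coeff_C] using this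
    have hcv : c = a * (y₁ * y₂) := by
      have := congrArg (fun q => Polynomial.coeff q 0) hfact
      simpa [hP, coeff_C] using this
    -- norms
    have han : (0:ℝ) < ‖a‖ := norm_pos_iff.mpr ha
    set s := ‖y₁‖ with hs
    set t := ‖y₂‖ with ht
    have hsn : 0 ≤ s := norm_nonneg _
    have htn : 0 ≤ t := norm_nonneg _
    have hbnorm : ‖b‖ ≤ ‖a‖ * (s + t) := by
      rw [hbv, norm_neg, norm_mul]
      gcongr
      exact norm_add_le _ _
    have hcnorm : ‖c‖ = ‖a‖ * (s * t) := by
      rw [hcv, norm_mul, norm_mul]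
    have key : ‖a‖ * (1 + s * t) < ‖a‖ * (s + t) := by
      calc ‖a‖ * (1 + s * t) = ‖a‖ + ‖c‖ := by rw [hcnorm]; ring
        _ < ‖b‖ := h
        _ ≤ ‖a‖ * (s + t) := hbnorm
    have key2 : 1 + s * t < s + t := lt_of_mul_lt_mul_left (by linarith) (le_of_lt han)
    -- exactly one of s<1, t<1
    have hone : (s < 1 ∧ ¬ t < 1) ∨ (¬ s < 1 ∧ t < 1) := by
      rcases lt_or_ge s 1 with h1 | h1
      · left; constructor; exact h1; nlinarith
      · right
        have : t < 1 := by nlinarith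
        exact ⟨not_lt.mpr h1, this⟩
    rw [hy]
    rcases hone with ⟨h1, h2⟩ | ⟨h1, h2⟩
    · simp [Multiset.filter_cons, Multiset.filter_singleton,
        show ‖y₁‖ < 1 from h1, show ¬ ‖y₂‖ < 1 from h2]
    · simp [Multiset.filter_cons, Multiset.filter_singleton,
        show ¬ ‖y₁‖ < 1 from h1, show ‖y₂‖ < 1 from h2]

lemma key_ineq (α β : ℝ) (x : ℂ) (hx : ‖x‖ = 1) (hx1 : x ≠ 1)
    (hβ : 0 < β) (hαβ : β ≤ α) : α - β < ‖(α : ℂ) - (β : ℂ) * x‖ := by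
  have hre : x.re < 1 := by
    rcases lt_or_eq_of_le (Complex.re_le_norm x) with h | h
    · simpa [hx] using h
    · exfalso
      apply hx1
      have habs : ‖x‖ = 1 := hx
      have h2 : x.re = 1 := by rw [h, habs]
      have h3 : x.re ^ 2 + x.im ^ 2 = 1 := by
        have := Complex.sq_norm x
        rw [habs] at this
        rw [Complex.normSq_apply] at this
        nlinarith [this]
      have him : x.im = 0 := by nlinarith
      exact Complex.ext h2 him
  have hx2 : x.re ^ 2 + x.im ^ 2 = 1 := by
    have habs : ‖x‖ = 1 := hx
    have := Complex.sq_norm x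
    rw [habs, Complex.normSq_apply] at this
    nlinarith [this]
  have hnsq : ‖(α : ℂ) - (β : ℂ) * x‖ ^ 2 = (α - β * x.re) ^ 2 + (β * x.im) ^ 2 := by
    rw [← Complex.normSq_eq_norm_sq, Complex.normSq_apply]
    simp [Complex.sub_re, Complex.sub_im, Complex.mul_re, Complex.mul_im]
    ring
  have hsq : (α - β) ^ 2 < ‖(α : ℂ) - (β : ℂ) * x‖ ^ 2 := by
    rw [hnsq]
    have h4 : 0 < α * β * (1 - x.re) :=
      mul_pos (mul_pos (lt_of_lt_of_le hβ hαβ) hβ) (by linarith)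
    nlinarith [h4, hx2, sq_nonneg β]
  nlinarith [norm_nonneg ((α : ℂ) - (β : ℂ) * x), hsq]

/-- Assume $p_{-1,-1}=0$, $p_{0,0}>0$, $p_{1,0}>0$. For every $x$ with
$|x|=1$, $x \ne 1$, the polynomial $y \mapsto R(x,y)$ has exactly one root (with
multiplicity) in the open unit disk. -/
theorem stmt_6
    (pmm pm0 pmp p0m p00 p0p ppm pp0 ppp : ℝ)
    (hmm : 0 ≤ pmm) (hm0 : 0 ≤ pm0) (hmp : 0 ≤ pmp)
    (h0m : 0 ≤ p0m) (h00 : 0 ≤ p00) (h0p : 0 ≤ p0p)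
    (hpm : 0 ≤ ppm) (hp0 : 0 ≤ pp0) (hpp : 0 ≤ ppp)
    (hsum : pmm + pm0 + pmp + p0m + p00 + p0p + ppm + pp0 + ppp = 1)
    (hmm0 : pmm = 0) (h00pos : 0 < p00) (hp0pos : 0 < pp0)
    (Ry : ℂ → Polynomial ℂ)
    (hRy : ∀ x : ℂ, Ry x =
      C (-((pmp : ℂ) + (p0p : ℂ) * x + (ppp : ℂ) * x ^ 2)) * X ^ 2
      + C (x - ((pm0 : ℂ) + (p00 : ℂ) * x + (pp0 : ℂ) * x ^ 2)) * X
      + C (-((pmm : ℂ) + (p0m : ℂ) * x + (ppm : ℂ) * x ^ 2))) :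
    ∀ x : ℂ, ‖x‖ = 1 → x ≠ 1 →
      Multiset.card (Multiset.filter (fun z => ‖z‖ < 1) (Ry x).roots) = 1 := by
  intro x hx hx1
  rw [hRy x]
  apply quad_one_root
  -- norms of coefficients
  set a : ℂ := -((pmp : ℂ) + (p0p : ℂ) * x + (ppp : ℂ) * x ^ 2) with hadef
  set b : ℂ := x - ((pm0 : ℂ) + (p00 : ℂ) * x + (pp0 : ℂ) * x ^ 2) with hbdef
  set c : ℂ := -((pmm : ℂ) + (p0m : ℂ) * x + (ppm : ℂ) * x ^ 2) with hcdef
  have hxn : ‖x ^ 2‖ = 1 := by rw [norm_pow, hx, one_pow]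
  have hnr : ∀ r : ℝ, 0 ≤ r → ‖(r : ℂ)‖ = r := fun r hr => by
    rw [Complex.norm_real]; exact Real.norm_of_nonneg hr
  have hna : ‖a‖ ≤ pmp + p0p + ppp := by
    rw [hadef, norm_neg]
    calc ‖(pmp : ℂ) + (p0p : ℂ) * x + (ppp : ℂ) * x ^ 2‖
        ≤ ‖(pmp : ℂ) + (p0p : ℂ) * x‖ + ‖(ppp : ℂ) * x ^ 2‖ := norm_add_le _ _
      _ ≤ ‖(pmp : ℂ)‖ + ‖(p0p : ℂ) * x‖ + ‖(ppp : ℂ) * x ^ 2‖ := by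
          gcongr; exact norm_add_le _ _
      _ = pmp + p0p + ppp := by
          rw [norm_mul, norm_mul, hx, hxn, hnr _ hmp, hnr _ h0p, hnr _ hpp]; ring
  have hnc : ‖c‖ ≤ pmm + p0m + ppm := by
    rw [hcdef, norm_neg]
    calc ‖(pmm : ℂ) + (p0m : ℂ) * x + (ppm : ℂ) * x ^ 2‖
        ≤ ‖(pmm : ℂ) + (p0m : ℂ) * x‖ + ‖(ppm : ℂ) * x ^ 2‖ := norm_add_le _ _
      _ ≤ ‖(pmm : ℂ)‖ + ‖(p0m : ℂ) * x‖ + ‖(ppm : ℂ) * x ^ 2‖ := by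
          gcongr; exact norm_add_le _ _
      _ = pmm + p0m + ppm := by
          rw [norm_mul, norm_mul, hx, hxn, hnr _ hmm, hnr _ h0m, hnr _ hpm]; ring
  have hnb : 1 - p00 - pp0 - pm0 < ‖b‖ := by
    have hrewrite : b = x * (((1 - p00 : ℝ) : ℂ) - ((pp0 : ℝ) : ℂ) * x) - ((pm0 : ℝ) : ℂ) := by
      rw [hbdef]
      push_cast
      ring
    have hkey : (1 - p00) - pp0 < ‖((1 - p00 : ℝ) : ℂ) - ((pp0 : ℝ) : ℂ) * x‖ := by
      apply key_ineq _ _ x hx hx1 hp0pos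
      linarith
    calc 1 - p00 - pp0 - pm0
        < ‖((1 - p00 : ℝ) : ℂ) - ((pp0 : ℝ) : ℂ) * x‖ - pm0 := by linarith
      _ = ‖x * (((1 - p00 : ℝ) : ℂ) - ((pp0 : ℝ) : ℂ) * x)‖ - ‖((pm0 : ℝ) : ℂ)‖ := by
          rw [norm_mul, hx, one_mul, hnr _ hm0]
      _ ≤ ‖x * (((1 - p00 : ℝ) : ℂ) - ((pp0 : ℝ) : ℂ) * x) - ((pm0 : ℝ) : ℂ)‖ :=
          norm_sub_norm_le _ _
      _ = ‖b‖ := by rw [hrewrite]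
  linarith
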